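/- Under the hypotheses of the previous statement (f* continuous, nondecreasing, and translation-equivariant in preference order), the set L = {x ∈ ℝ^s : f*(R + x) = f*(R), R + x ≥ 0} for a fixed interior regret vector R is the intersection of a linear subspace of dimension s − 1 with the translates allowed, i.e., there is a nonzero vector p such that f*(R) = f*(R') whenever R, R' ∈ ℝ₊^s satisfy pᵀR = pᵀR'. -/

import Mathlib

lemma lin_aux (φ : ℝ → ℝ) (h0 : φ 0 = 0)
    (hadd : ∀ a b : ℝ, 0 ≤ a → 0 ≤ b → φ (a + b) = φ a + φ b)
    (hm : ∀ a b : ℝ, 0 ≤ a → a ≤ b → φ a ≤ φ b) :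
    ∀ c : ℝ, 0 ≤ c → φ c = c * φ 1 := by
  have hnat : ∀ (n : ℕ) (x : ℝ), 0 ≤ x → φ (n * x) = n * φ x := by
    intro n
    induction n with
    | zero => intro x hx; simp [h0]
    | succ n ih =>
      intro x hx
      have h : ((n : ℝ) + 1) * x = (n : ℝ) * x + x := by ring
      push_cast
      rw [h, hadd _ _ (by positivity) hx, ih x hx]; ring
  have hq : ∀ q : ℚ, 0 ≤ q → φ (q : ℝ) = (q : ℝ) * φ 1 := by
    intro q hq0
    have hden : (0:ℝ) < (q.den : ℝ) := by positivity
    have hqr : (0:ℝ) ≤ (q : ℝ) := by exact_mod_cast hq0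
    have h1 : φ ((q.den : ℝ) * (q : ℝ)) = (q.den : ℝ) * φ (q : ℝ) := hnat q.den _ hqr
    have h2 : ((q.den : ℝ)) * (q : ℝ) = (q.num : ℝ) := by
      rw [mul_comm]
      exact_mod_cast Rat.mul_den_eq_num q
    have hnum : 0 ≤ q.num := Rat.num_nonneg.mpr hq0
    obtain ⟨m, hm'⟩ := Int.eq_ofNat_of_zero_le hnum
    have h3 : φ ((q.num : ℝ)) = (q.num : ℝ) * φ 1 := by
      rw [hm']; push_cast
      simpa using hnat m 1 zero_le_one
    rw [h2, h3] at h1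
    have h4 : φ (q : ℝ) = (q.num : ℝ) / (q.den : ℝ) * φ 1 := by
      field_simp; linarith [h1]
    rw [h4, Rat.cast_def]
  have hφ1 : 0 ≤ φ 1 := h0 ▸ hm 0 1 le_rfl zero_le_one
  intro c hc
  rcases eq_or_lt_of_le hφ1 with h1z | h1p
  · obtain ⟨q, hq1⟩ := exists_rat_gt c
    have hq0 : (0:ℚ) ≤ q := by exact_mod_cast le_of_lt (lt_of_le_of_lt hc hq1)
    have hφq : φ (q : ℝ) = 0 := by rw [hq q hq0, ← h1z, mul_zero]
    have h1 : φ c ≤ 0 := hφq ▸ hm c q hc (le_of_lt hq1)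
    have h2 : 0 ≤ φ c := h0 ▸ hm 0 c le_rfl hc
    rw [← h1z]; linarith
  · apply le_antisymm
    · by_contra h
      push_neg at h
      have hcd : c < φ c / φ 1 := (lt_div_iff₀ h1p).mpr (by linarith)
      obtain ⟨q, hq1, hq2⟩ := exists_rat_btwn hcd
      have hq0 : (0:ℚ) ≤ q := by exact_mod_cast le_of_lt (lt_of_le_of_lt hc hq1)
      have hle : φ c ≤ (q:ℝ) * φ 1 := by
        rw [← hq q hq0]; exact hm c q hc (le_of_lt hq1)
      have hlt : (q:ℝ) * φ 1 < φ c := by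
        have := (lt_div_iff₀ h1p).mp hq2
        linarith
      linarith
    · rcases eq_or_lt_of_le hc with hc0 | hc0
      · simp [← hc0, h0]
      · by_contra h
        push_neg at h
        have hcd : max (φ c / φ 1) 0 < c := by
          apply max_lt _ hc0
          exact (div_lt_iff₀ h1p).mpr (by linarith)
        obtain ⟨q, hq1, hq2⟩ := exists_rat_btwn hcd
        have hq0 : (0:ℚ) ≤ q := by
          have : (0:ℝ) ≤ (q:ℝ) := le_of_lt (lt_of_le_of_lt (le_max_right _ _) hq1)
          exact_mod_cast this
        have hle : (q:ℝ) * φ 1 ≤ φ c := by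
          rw [← hq q hq0]; exact hm q c (by exact_mod_cast hq0) (le_of_lt hq2)
        have hgt : φ c < (q:ℝ) * φ 1 := by
          have h1 : φ c / φ 1 < (q:ℝ) := lt_of_le_of_lt (le_max_left _ _) hq1
          have := (div_lt_iff₀ h1p).mp h1
          linarith
        linarith


/-- Level-set structure step: under continuity, monotonicity and translation-equivariance of
both strict preference and indifference, the level sets of `f` on the nonnegative orthant are
cut out by a single nonzero linear functional `p`. -/
theorem stmt2 {s : ℕ} (hs : 1 ≤ s) (f : (Fin s → ℝ) → ℝ)
    (hcont : ContinuousOn f {R : Fin s → ℝ | ∀ i, 0 ≤ R i})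
    (hmono : ∀ R R' : Fin s → ℝ, (∀ i, 0 ≤ R i) → (∀ i, 0 ≤ R' i) →
      (∀ i, R i ≤ R' i) → f R ≤ f R')
    (hIIAlt : ∀ R R' a : Fin s → ℝ, (∀ i, 0 ≤ R i) → (∀ i, 0 ≤ R' i) →
      (∀ i, 0 ≤ R i + a i) → (∀ i, 0 ≤ R' i + a i) →
      f R' < f R → f (R' + a) < f (R + a))
    (hIIAeq : ∀ R R' a : Fin s → ℝ, (∀ i, 0 ≤ R i) → (∀ i, 0 ≤ R' i) →
      (∀ i, 0 ≤ R i + a i) → (∀ i, 0 ≤ R' i + a i) →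
      f R = f R' → f (R + a) = f (R' + a)) :
    ∃ p : Fin s → ℝ, p ≠ 0 ∧
      ∀ R R' : Fin s → ℝ, (∀ i, 0 ≤ R i) → (∀ i, 0 ≤ R' i) →
        (∑ i, p i * R i = ∑ i, p i * R' i) → f R = f R' := by
  haveI : NeZero s := ⟨by omega⟩
  have i0 : Fin s := ⟨0, by omega⟩
  by_cases hconst : ∀ R : Fin s → ℝ, (∀ i, 0 ≤ R i) → f R = f 0
  · refine ⟨Pi.single i0 1, ?_, ?_⟩
    · intro h
      have := congrFun h i0
      simp at this
    · intro R R' hR hR' _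
      rw [hconst R hR, hconst R' hR']
  -- nonconstant case
  push_neg at hconst
  obtain ⟨R₀, hR₀, hne⟩ := hconst
  set g : ℝ → ℝ := fun t => f (fun _ => t) with hg
  have gmono : ∀ a b : ℝ, 0 ≤ a → a ≤ b → g a ≤ g b := by
    intro a b ha hab
    exact hmono _ _ (fun _ => ha) (fun _ => le_trans ha hab) (fun _ => hab)
  have hzero : (fun (_ : Fin s) => (0:ℝ)) = (0 : Fin s → ℝ) := rfl
  have hg0 : g 0 = f 0 := congrArg f hzero
  -- M₀ bound for R₀
  have huniv : (Finset.univ : Finset (Fin s)).Nonempty := ⟨i0, Finset.mem_univ _⟩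
  set M₀ : ℝ := Finset.univ.sup' huniv R₀ with hM₀
  have hM₀le : ∀ i, R₀ i ≤ M₀ := fun i => Finset.le_sup' R₀ (Finset.mem_univ i)
  have hM₀0 : 0 ≤ M₀ := le_trans (hR₀ i0) (hM₀le i0)
  have hg0M : g 0 < g M₀ := by
    have h1 : f 0 ≤ f R₀ := hmono 0 R₀ (fun _ => le_rfl) hR₀ hR₀
    have h2 : f R₀ ≤ g M₀ := hmono R₀ _ hR₀ (fun _ => hM₀0) hM₀le
    have h3 : f 0 < f R₀ := lt_of_le_of_ne h1 (Ne.symm hne)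
    calc g 0 = f 0 := hg0
    _ < f R₀ := h3
    _ ≤ g M₀ := h2
  -- flatness propagation
  have hflat : ∀ a b : ℝ, 0 ≤ a → a < b → g a = g b → ∀ t, a ≤ t → g t = g a := by
    intro a b ha hab heq t ht
    set d := b - a with hd
    have hd0 : 0 < d := by simp [hd]; linarith
    have step : ∀ n : ℕ, g (a + n * d) = g a := by
      intro n
      induction n with
      | zero => simp
      | succ n ih =>
        have hnd : (0:ℝ) ≤ (n:ℝ) * d := by positivity
        have h1 : g (a + (n:ℝ) * d) = g (b + (n:ℝ) * d) :=
          hIIAeq (fun _ => a) (fun _ => b) (fun _ => (n:ℝ) * d)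
            (fun _ => ha) (fun _ => by linarith) (fun _ => show (0:ℝ) ≤ a + (n:ℝ)*d by linarith)
            (fun _ => show (0:ℝ) ≤ b + (n:ℝ)*d by linarith) heq
        have h2 : a + ((n+1:ℕ):ℝ) * d = b + (n:ℝ) * d := by push_cast; rw [hd]; ring
        rw [h2, ← h1, ih]
    have : ∃ n : ℕ, t ≤ a + n * d := by
      refine ⟨⌈(t - a) / d⌉₊, ?_⟩
      have := Nat.le_ceil ((t - a) / d)
      have h2 : t - a ≤ ⌈(t - a) / d⌉₊ * d := by
        rw [← div_le_iff₀ hd0] at *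
        exact this
      linarith
    obtain ⟨n, hn⟩ := this
    have h1 : g a ≤ g t := gmono a t ha ht
    have h2 : g t ≤ g (a + n * d) := gmono t _ (le_trans ha ht) hn
    rw [step n] at h2
    linarith
  -- strict monotonicity of g on nonnegatives
  have gstrict : ∀ a b : ℝ, 0 ≤ a → a < b → g a < g b := by
    intro a b ha hab
    by_contra h
    push_neg at h
    have heq : g a = g b := le_antisymm (gmono a b ha (le_of_lt hab)) h
    have hflat' := hflat a b ha hab heq
    rcases eq_or_lt_of_le (gmono 0 a le_rfl ha) with h0a | h0a
    · have heq0 : g 0 = g b := h0a.trans heq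
      have : g M₀ = g 0 := hflat 0 b le_rfl (lt_of_le_of_lt ha hab) heq0 M₀ hM₀0
      linarith
    · have hlt : g (0 + a) < g (a + a) :=
        hIIAlt (fun _ => a) (fun _ => 0) (fun _ => a)
          (fun _ => ha) (fun _ => le_rfl) (fun _ => show (0:ℝ) ≤ a + a by linarith)
          (fun _ => show (0:ℝ) ≤ 0 + a by linarith) h0a
      rw [zero_add] at hlt
      have := hflat' (a + a) (by linarith)
      linarith
  have ginj : ∀ a b : ℝ, 0 ≤ a → 0 ≤ b → g a = g b → a = b := by
    intro a b ha hb heq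
    rcases lt_trichotomy a b with h | h | h
    · exact absurd heq (ne_of_lt (gstrict a b ha h))
    · exact h
    · exact absurd heq.symm (ne_of_lt (gstrict b a hb h))
  -- continuity of g on nonnegatives
  have gcont : ContinuousOn g {t : ℝ | 0 ≤ t} := by
    have hdiag : Continuous (fun t : ℝ => (fun _ : Fin s => t)) :=
      continuous_pi (fun _ => continuous_id)
    exact hcont.comp hdiag.continuousOn (fun t ht i => ht)
  -- existence of diagonal representative
  have hex : ∀ R : Fin s → ℝ, ∃ t : ℝ, (∀ i, 0 ≤ R i) → 0 ≤ t ∧ g t = f R := by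
    intro R
    by_cases hR : ∀ i, 0 ≤ R i
    · set M : ℝ := Finset.univ.sup' huniv R with hM
      have hMle : ∀ i, R i ≤ M := fun i => Finset.le_sup' R (Finset.mem_univ i)
      have hM0 : 0 ≤ M := le_trans (hR i0) (hMle i0)
      have h1 : f R ∈ Set.Icc (g 0) (g M) := by
        constructor
        · have h0R : f 0 ≤ f R := hmono 0 R (fun _ => le_rfl) hR hR
          rw [hg0]; exact h0R
        · exact hmono R _ hR (fun _ => hM0) hMle
      have hsub : Set.Icc (0:ℝ) M ⊆ {t : ℝ | 0 ≤ t} := fun t ht => ht.1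
      have := intermediate_value_Icc hM0 (gcont.mono hsub)
      obtain ⟨t, htmem, hteq⟩ := this h1
      exact ⟨t, fun _ => ⟨htmem.1, hteq⟩⟩
    · exact ⟨0, fun h => absurd h hR⟩
  choose u hu using hex
  have hu0 : ∀ R, (∀ i, 0 ≤ R i) → 0 ≤ u R := fun R h => (hu R h).1
  have hug : ∀ R, (∀ i, 0 ≤ R i) → g (u R) = f R := fun R h => (hu R h).2
  -- u additive
  have uadd : ∀ R a : Fin s → ℝ, (∀ i, 0 ≤ R i) → (∀ i, 0 ≤ a i) →
      u (R + a) = u R + u a := by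
    intro R a hR ha
    have hRa : ∀ i, 0 ≤ (R + a) i := fun i => add_nonneg (hR i) (ha i)
    have h1 : f (R + a) = f ((fun _ => u R) + a) := by
      refine hIIAeq R (fun _ => u R) a hR (fun _ => hu0 R hR) hRa
        (fun i => add_nonneg (hu0 R hR) (ha i)) ?_
      exact (hug R hR).symm
    have h2 : f (a + (fun _ => u R)) = f ((fun _ => u a) + (fun _ => u R)) := by
      refine hIIAeq a (fun _ => u a) (fun _ => u R) ha (fun _ => hu0 a ha)
        (fun i => add_nonneg (ha i) (hu0 R hR))
        (fun _ => add_nonneg (hu0 a ha) (hu0 R hR)) ?_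
      exact (hug a ha).symm
    have h3 : ((fun (_ : Fin s) => u R) + a) = (a + fun _ => u R) := add_comm _ _
    have h4 : ((fun (_ : Fin s) => u a) + (fun _ => u R)) = (fun (_ : Fin s) => u a + u R) := rfl
    have h5 : g (u (R + a)) = g (u a + u R) := by
      rw [hug _ hRa, h1, h3, h2, h4]
    have := ginj _ _ (hu0 _ hRa) (add_nonneg (hu0 a ha) (hu0 R hR)) h5
    rw [this]; ring
  have u0 : u 0 = 0 := by
    have h1 : g (u 0) = g 0 := (hug 0 (fun _ => le_rfl)).trans hg0.symm
    exact ginj _ _ (hu0 0 (fun _ => le_rfl)) le_rfl h1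
  -- u monotone in f-values
  have ule : ∀ R R' : Fin s → ℝ, (∀ i, 0 ≤ R i) → (∀ i, 0 ≤ R' i) →
      f R ≤ f R' → u R ≤ u R' := by
    intro R R' hR hR' hle
    by_contra h
    push_neg at h
    have := gstrict (u R') (u R) (hu0 R' hR') h
    rw [hug R hR, hug R' hR'] at this
    linarith
  -- single nonneg
  have hsingle : ∀ (i : Fin s) (c : ℝ), 0 ≤ c → ∀ j, 0 ≤ (Pi.single i c : Fin s → ℝ) j := by
    intro i c hc j
    rcases eq_or_ne j i with h | h
    · rw [h, Pi.single_eq_same]; exact hc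
    · simp [Pi.single_eq_of_ne h]
  -- φ i linear
  set p : Fin s → ℝ := fun i => u (Pi.single i 1) with hp
  have hφ : ∀ (i : Fin s) (c : ℝ), 0 ≤ c → u (Pi.single i c) = c * p i := by
    intro i
    apply lin_aux (fun c => u (Pi.single i c))
    · simp [u0]
    · intro a b ha hb
      rw [Pi.single_add]
      exact uadd _ _ (hsingle i a ha) (hsingle i b hb)
    · intro a b ha hab
      refine ule _ _ (hsingle i a ha) (hsingle i b (le_trans ha hab)) ?_
      refine hmono _ _ (hsingle i a ha) (hsingle i b (le_trans ha hab)) ?_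
      intro j
      rcases eq_or_ne j i with h | h
      · rw [h, Pi.single_eq_same, Pi.single_eq_same]; exact hab
      · simp [Pi.single_eq_of_ne h]
  -- sum decomposition
  have usum : ∀ R : Fin s → ℝ, (∀ i, 0 ≤ R i) → u R = ∑ i, p i * R i := by
    intro R hR
    have key : ∀ t : Finset (Fin s),
        u (∑ i ∈ t, Pi.single i (R i)) = ∑ i ∈ t, u (Pi.single i (R i)) := by
      intro t
      induction t using Finset.induction with
      | empty => simpa using u0
      | insert _ _ hnotmem ih =>
        rename_i a t'
        rw [Finset.sum_insert hnotmem, Finset.sum_insert hnotmem, ← ih]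
        apply uadd
        · exact hsingle a (R a) (hR a)
        · intro j
          rw [Finset.sum_apply]
          apply Finset.sum_nonneg
          intro i _
          exact hsingle i (R i) (hR i) j
    have hdecomp : R = ∑ i, Pi.single i (R i) := (Finset.univ_sum_single R).symm
    calc u R = u (∑ i, Pi.single i (R i)) := by rw [← hdecomp]
    _ = ∑ i, u (Pi.single i (R i)) := key Finset.univ
    _ = ∑ i, p i * R i := by
        apply Finset.sum_congr rfl
        intro i _
        rw [hφ i (R i) (hR i)]; ring
  -- p nonzero
  have hones : ∀ i, (0:ℝ) ≤ (fun (_ : Fin s) => (1:ℝ)) i := fun _ => zero_le_one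
  have hu1 : u (fun _ => 1) = 1 :=
    ginj _ _ (hu0 _ hones) zero_le_one (hug _ hones)
  have hpsum : ∑ i, p i = 1 := by
    have := usum (fun _ => 1) hones
    rw [hu1] at this
    simpa using this.symm
  refine ⟨p, ?_, ?_⟩
  · intro h
    rw [h] at hpsum
    simp at hpsum
  · intro R R' hR hR' hsum
    have h1 : u R = u R' := by rw [usum R hR, usum R' hR', hsum]
    rw [← hug R hR, ← hug R' hR', h1]
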